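/- Let v₁, v₂ be unit vectors in ℝ² making angle 2θ with π/4 < θ < π/2, and set v₃ = −(v₁+v₂)/|v₁+v₂|. Then for any 2×2 matrix F with Fv₃^⊥ ≠ 0, the inequality Fv₁ · Fv₂ > 0 holds if and only if |Fv₃|/|Fv₃^⊥| > sin θ / cos θ. -/

import Mathlib

noncomputable section

def dot2 (a b : Fin 2 → ℝ) : ℝ := a 0 * b 0 + a 1 * b 1

def norm2 (a : Fin 2 → ℝ) : ℝ := Real.sqrt (dot2 a a)

def perp (a : Fin 2 → ℝ) : Fin 2 → ℝ := ![-(a 1), a 0]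


private lemma sqrt_div_aux (s c A B : ℝ) (hs : 0 < s) (hc : 0 < c) (hA : 0 ≤ A) (hB : 0 < B) :
    0 < c^2 * A - s^2 * B ↔ s / c < Real.sqrt A / Real.sqrt B := by
  have hsB : 0 < Real.sqrt B := Real.sqrt_pos.mpr hB
  have hsA : 0 ≤ Real.sqrt A := Real.sqrt_nonneg A
  have h1 : Real.sqrt A ^ 2 = A := Real.sq_sqrt hA
  have h2 : Real.sqrt B ^ 2 = B := Real.sq_sqrt hB.le
  rw [div_lt_div_iff₀ hc hsB]
  constructor
  · intro h
    nlinarith [h1, h2, hsA, hsB, mul_pos hs hsB, mul_nonneg hs.le hsB.le,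
      mul_nonneg (mul_nonneg hc.le hsA) (mul_nonneg hc.le hsA), mul_nonneg hc.le hsA]
  · intro h
    nlinarith [h1, h2, hsA, hsB, mul_pos hs hsB, mul_nonneg hs.le hsB.le, mul_nonneg hc.le hsA]

set_option maxHeartbeats 1600000 in
theorem stmt3 (θ : ℝ) (hθ : θ ∈ Set.Ioo (Real.pi/4) (Real.pi/2))
    (v₁ v₂ : Fin 2 → ℝ) (hv₁ : norm2 v₁ = 1) (hv₂ : norm2 v₂ = 1)
    (hangle : dot2 v₁ v₂ = Real.cos (2*θ))
    (hright : dot2 (perp v₁) v₂ = Real.sin (2*θ))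
    (v₃ : Fin 2 → ℝ) (hv₃ : v₃ = fun i => -(v₁ i + v₂ i) / norm2 (fun j => v₁ j + v₂ j))
    (F : Matrix (Fin 2) (Fin 2) ℝ) (hF : F.mulVec (perp v₃) ≠ 0) :
    0 < dot2 (F.mulVec v₁) (F.mulVec v₂) ↔
      Real.sin θ / Real.cos θ < norm2 (F.mulVec v₃) / norm2 (F.mulVec (perp v₃)) := by
  obtain ⟨hθ1, hθ2⟩ := hθ
  have hpi := Real.pi_pos
  have hc : 0 < Real.cos θ := Real.cos_pos_of_mem_Ioo ⟨by linarith, hθ2⟩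
  have hs : 0 < Real.sin θ := Real.sin_pos_of_pos_of_lt_pi (by linarith) (by linarith)
  set s := Real.sin θ with hsdef
  set c := Real.cos θ with hcdef
  have hsc : s^2 + c^2 = 1 := Real.sin_sq_add_cos_sq θ
  -- unit norms give dot products = 1
  have h01 : 0 ≤ dot2 v₁ v₁ := by unfold dot2; nlinarith [sq_nonneg (v₁ 0), sq_nonneg (v₁ 1)]
  have h02 : 0 ≤ dot2 v₂ v₂ := by unfold dot2; nlinarith [sq_nonneg (v₂ 0), sq_nonneg (v₂ 1)]
  have hd1 : dot2 v₁ v₁ = 1 := by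
    have h := Real.sq_sqrt h01
    unfold norm2 at hv₁; rw [hv₁] at h; nlinarith [h]
  have hd2 : dot2 v₂ v₂ = 1 := by
    have h := Real.sq_sqrt h02
    unfold norm2 at hv₂; rw [hv₂] at h; nlinarith
  have hangle' : dot2 v₁ v₂ = c^2 - s^2 := by
    rw [hangle, Real.cos_two_mul]; linarith
  have hright' : -(v₁ 1) * v₂ 0 + v₁ 0 * v₂ 1 = 2 * s * c := by
    have h := hright
    simp only [perp, dot2, Matrix.cons_val_zero, Matrix.cons_val_one, Matrix.head_cons] at h
    rw [h, Real.sin_two_mul]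
  unfold dot2 at hd1 hd2 hangle'
  -- norm of v₁ + v₂
  have hc2 : (2:ℝ) * c ≠ 0 := by positivity
  have hn : norm2 (fun j => v₁ j + v₂ j) = 2 * c := by
    unfold norm2
    have : dot2 (fun j => v₁ j + v₂ j) (fun j => v₁ j + v₂ j) = (2*c)^2 := by
      show (v₁ 0 + v₂ 0) * (v₁ 0 + v₂ 0) + (v₁ 1 + v₂ 1) * (v₁ 1 + v₂ 1) = (2*c)^2
      linear_combination hd1 + hd2 + 2*hangle' - 2*hsc
    rw [this, Real.sqrt_sq (by positivity)]
  have hv₃0 : v₃ 0 = -(v₁ 0 + v₂ 0) / (2*c) := by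
    rw [hv₃]
    show -(v₁ 0 + v₂ 0) / norm2 (fun j => v₁ j + v₂ j) = -(v₁ 0 + v₂ 0) / (2*c)
    rw [hn]
  have hv₃1 : v₃ 1 = -(v₁ 1 + v₂ 1) / (2*c) := by
    rw [hv₃]
    show -(v₁ 1 + v₂ 1) / norm2 (fun j => v₁ j + v₂ j) = -(v₁ 1 + v₂ 1) / (2*c)
    rw [hn]
  -- key linear identities
  have hsq : (s*(v₁ 1 + v₂ 1) - c*(v₁ 0 - v₂ 0))^2 + (s*(v₁ 0 + v₂ 0) + c*(v₁ 1 - v₂ 1))^2 = 0 := by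
    linear_combination (s^2+c^2)*hd1 + (s^2+c^2)*hd2 + (2*s^2-2*c^2)*hangle'
      - 4*s*c*hright' - 2*(s^2+c^2)*hsc
  have hE1 : s*(v₁ 1 + v₂ 1) - c*(v₁ 0 - v₂ 0) = 0 := by
    have h2 : (s*(v₁ 1 + v₂ 1) - c*(v₁ 0 - v₂ 0))^2 = 0 := by
      linarith [sq_nonneg (s*(v₁ 0 + v₂ 0) + c*(v₁ 1 - v₂ 1)), sq_nonneg (s*(v₁ 1 + v₂ 1) - c*(v₁ 0 - v₂ 0)), hsq]
    exact pow_eq_zero_iff (by norm_num) |>.mp h2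
  have hE2 : s*(v₁ 0 + v₂ 0) + c*(v₁ 1 - v₂ 1) = 0 := by
    have h2 : (s*(v₁ 0 + v₂ 0) + c*(v₁ 1 - v₂ 1))^2 = 0 := by
      linarith [sq_nonneg (s*(v₁ 1 + v₂ 1) - c*(v₁ 0 - v₂ 0)), sq_nonneg (s*(v₁ 0 + v₂ 0) + c*(v₁ 1 - v₂ 1)), hsq]
    exact pow_eq_zero_iff (by norm_num) |>.mp h2
  set a := F.mulVec v₃ with ha
  set b := F.mulVec (perp v₃) with hb
  -- decomposition
  have hp0 : perp v₃ 0 = -(v₃ 1) := rfl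
  have hp1 : perp v₃ 1 = v₃ 0 := rfl
  have hw10 : v₁ 0 = -(c * v₃ 0) + s * perp v₃ 0 := by
    rw [hp0, hv₃0, hv₃1]; field_simp; linear_combination -hE1
  have hw11 : v₁ 1 = -(c * v₃ 1) + s * perp v₃ 1 := by
    rw [hp1, hv₃0, hv₃1]; field_simp; linear_combination hE2
  have hw20 : v₂ 0 = -(c * v₃ 0) - s * perp v₃ 0 := by
    rw [hp0, hv₃0, hv₃1]; field_simp; linear_combination hE1
  have hw21 : v₂ 1 = -(c * v₃ 1) - s * perp v₃ 1 := by
    rw [hp1, hv₃0, hv₃1]; field_simp; linear_combination -hE2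
  have hFv₁ : ∀ i, F.mulVec v₁ i = -(c * a i) + s * b i := by
    intro i
    simp only [ha, hb, Matrix.mulVec, dotProduct, Fin.sum_univ_two]
    rw [hw10, hw11]; ring
  have hFv₂ : ∀ i, F.mulVec v₂ i = -(c * a i) - s * b i := by
    intro i
    simp only [ha, hb, Matrix.mulVec, dotProduct, Fin.sum_univ_two]
    rw [hw20, hw21]; ring
  have hP : dot2 (F.mulVec v₁) (F.mulVec v₂) = c^2 * dot2 a a - s^2 * dot2 b b := by
    unfold dot2; rw [hFv₁ 0, hFv₁ 1, hFv₂ 0, hFv₂ 1]; ring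
  have hA : 0 ≤ dot2 a a := by unfold dot2; nlinarith [sq_nonneg (a 0), sq_nonneg (a 1)]
  have hB : 0 < dot2 b b := by
    have hne : b 0 ≠ 0 ∨ b 1 ≠ 0 := by
      by_contra h
      push_neg at h
      apply hF
      funext i; fin_cases i <;> simp [← hb, h.1, h.2]
    unfold dot2
    rcases hne with h | h <;>
      linarith [mul_self_nonneg (b 0), mul_self_nonneg (b 1), mul_self_pos.mpr h]
  rw [hP]
  have hkey := sqrt_div_aux s c (dot2 a a) (dot2 b b) hs hc hA hB
  simpa [norm2] using hkey
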